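/- For every string T of length n over an alphabet [0..σ) and every integer τ with 1 ≤ τ ≤ ⌊n/2⌋, there exists a τ-synchronizing set Sync of T such that |Sync| < 70n/τ and, moreover, per(T[i..i+2τ)) > τ/3 holds for every i ∈ Sync. -/

import Mathlib

namespace SyncFormal

/-- The fragment `T[i..j)` of a string `T`. -/
def frag {α : Type*} (T : List α) (i j : ℕ) : List α :=
  (T.drop i).take (j - i)

/-- `p` is a period of the string `S`. -/
def IsPeriod {α : Type*} (S : List α) (p : ℕ) : Prop :=
  1 ≤ p ∧ p ≤ S.length ∧ ∀ i : ℕ, i + p < S.length → S[i]? = S[i + p]?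

/-- `per S`: the smallest period of `S`. -/
noncomputable def per {α : Type*} (S : List α) : ℕ :=
  sInf {p | IsPeriod S p}

/-- `Sync` is a `τ`-synchronizing set of `T`. -/
def IsSyncSet {α : Type*} (T : List α) (τ : ℕ) (Sync : Set ℕ) : Prop :=
  (∀ i ∈ Sync, i + 2 * τ ≤ T.length) ∧
  (∀ i j : ℕ, i + 2 * τ ≤ T.length → j + 2 * τ ≤ T.length → i ∈ Sync →
    frag T i (i + 2 * τ) = frag T j (j + 2 * τ) → j ∈ Sync) ∧
  (∀ i : ℕ, i + 3 * τ ≤ T.length + 1 →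
    (Set.Ico i (i + τ) ∩ Sync = ∅ ↔ 3 * per (frag T i (i + 3 * τ - 1)) ≤ τ))

/-- `T[b..e)` is a run (maximal repetition) in `T`. -/
def IsRun {α : Type*} (T : List α) (b e : ℕ) : Prop :=
  b < e ∧ e ≤ T.length ∧
  2 * per (frag T b e) ≤ e - b ∧
  (b = 0 ∨ T[b - 1]? ≠ T[b - 1 + per (frag T b e)]?) ∧
  (e = T.length ∨ T[e]? ≠ T[e - per (frag T b e)]?)

/-- `T[b..e)` is a run of length at least `ℓ` and period at most `p`
(i.e., an element of `RUNS_{ℓ,p}(T)`). -/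
def IsRunLP {α : Type*} (T : List α) (ℓ p b e : ℕ) : Prop :=
  IsRun T b e ∧ ℓ ≤ e - b ∧ per (frag T b e) ≤ p

/-- `λ_k = (8/7)^⌊k/2⌋`. -/
noncomputable def lam (k : ℕ) : ℝ := (8 / 7 : ℝ) ^ (k / 2)

/-- `α_0 = 1`, `α_{k+1} = α_k + ⌊λ_k⌋`. -/
noncomputable def alph : ℕ → ℕ
  | 0 => 1
  | k + 1 => alph k + ⌊lam k⌋₊

/-- `m`-fold concatenation `R^m`. -/
def listPow {α : Type*} (R : List α) : ℕ → List α
  | 0 => []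
  | m + 1 => R ++ listPow R m

/-- The length of the primitive root of `S`
(the shortest prefix `R` of `S` with `S = R^m` for some `m ≥ 1`). -/
noncomputable def primRootLen {α : Type*} (S : List α) : ℕ :=
  sInf {r | 0 < r ∧ ∃ m : ℕ, 1 ≤ m ∧ S = listPow (S.take r) m}

/-- `i` and `j` are consecutive elements of the set `S`. -/
def Consecutive (S : Set ℕ) (i j : ℕ) : Prop :=
  i ∈ S ∧ j ∈ S ∧ i < j ∧ ∀ m ∈ S, m ≤ i ∨ j ≤ m

/-- `(B k)_{k ∈ ℕ}` is a recompression chain for `T`. -/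
def IsRecompressionChain {α : Type*} (T : List α) (B : ℕ → Set ℕ) : Prop :=
  B 0 = Set.Ico 1 T.length ∧
  (∀ k, B (k + 1) ⊆ B k) ∧
  (∀ k, B k ⊆ Set.Ico 1 T.length) ∧
  (∀ k, (B k).Finite ∧ ((B k).ncard : ℝ) * lam k ≤ 4 * T.length) ∧
  (∀ k i j : ℕ, alph k ≤ i → i + alph k ≤ T.length → alph k ≤ j → j + alph k ≤ T.length →
    i ∈ B k → frag T (i - alph k) (i + alph k) = frag T (j - alph k) (j + alph k) → j ∈ B k) ∧
  (∀ k i j : ℕ, Consecutive (B k ∪ {0, T.length}) i j →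
    (((j - i : ℕ) : ℝ) ≤ 7 / 4 * lam k ∨ (primRootLen (frag T i j) : ℝ) ≤ lam k))

/-- `k(τ) = max{ j : j = 0 ∨ 16·λ_{j-1} ≤ τ }`. -/
noncomputable def kOf (τ : ℕ) : ℕ :=
  sSup {j : ℕ | j = 0 ∨ 16 * lam (j - 1) ≤ (τ : ℝ)}

/-- The Elias-γ code of a positive integer `x`:
`⌊log₂ x⌋` zeros followed by the binary representation of `x` (MSB first). -/
def eliasGamma (x : ℕ) : List Bool :=
  List.replicate (Nat.log 2 x) false ++ (Nat.bits x).reverse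

/-- Sparse encoding, with `z` pending zeros in front of the remaining sequence. -/
def sparseEncAux : ℕ → List ℕ → List Bool
  | z, [] => if z = 0 then [] else false :: eliasGamma z
  | z, 0 :: rest => sparseEncAux (z + 1) rest
  | z, x :: rest =>
      (if z = 0 then [] else false :: eliasGamma z) ++ (true :: eliasGamma x)
        ++ sparseEncAux 0 rest

/-- The sparse encoding `⟨A⟩` of a sequence of non-negative integers. -/
def sparseEnc (A : List ℕ) : List Bool := sparseEncAux 0 A

/-- Number of bits contributed by the zero-run tokens of the sparse encoding,
with `z` pending zeros. -/
def zeroRunBitsAux : ℕ → List ℕ → ℕ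
  | z, [] => if z = 0 then 0 else 2 * Nat.log 2 z + 2
  | z, 0 :: rest => zeroRunBitsAux (z + 1) rest
  | z, _ :: rest => (if z = 0 then 0 else 2 * Nat.log 2 z + 2) + zeroRunBitsAux 0 rest

/-- Number of bits contributed by zero-run tokens to `⟨A⟩`. -/
def zeroRunBits (A : List ℕ) : ℕ := zeroRunBitsAux 0 A

/-- The natural number whose binary representation (MSB first) is `B`. -/
def bitsToNat (B : List Bool) : ℕ :=
  B.foldl (fun n b => 2 * n + cond b 1 0) 0

/-- The symbol of the zipped string for a column of values. -/
def zipSym (col : List ℕ) : ℕ :=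
  if col.all (· == 0) then 0 else bitsToNat (sparseEnc col)

/-- `zip(A_1, …, A_t)` for sequences of common length `n`. -/
def zipSeqs (A : List (List ℕ)) (n : ℕ) : List ℕ :=
  (List.range n).map fun i => zipSym (A.map fun S => S.getD i 0)

/-- Running a deterministic transducer with transition function `δ` from state `s`
on an input string: returns the state sequence `s_0, …, s_n` and the output string. -/
def runAux {Q Γ I : Type*} (δ : Q → I → Q × Γ) : Q → List I → List Q × List Γ
  | s, [] => ([s], [])
  | s, x :: xs =>
      (s :: (runAux δ (δ s x).1 xs).1, (δ s x).2 :: (runAux δ (δ s x).1 xs).2)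

/-- `R_{ℓ,p}(T) = { i : per(T[i..i+ℓ)) ≤ p }`. -/
def RSet {α : Type*} (T : List α) (ℓ p : ℕ) : Set ℕ :=
  {i | i + ℓ ≤ T.length ∧ per (frag T i (i + ℓ)) ≤ p}

variable {α : Type*}

/-- `p` is a period of `T[a..b)` in `T`-coordinates. -/
def TPer (T : List α) (a b p : ℕ) : Prop :=
  ∀ x : ℕ, a ≤ x → x + p < b → T[x]? = T[x + p]?

lemma frag_length (T : List α) {a b : ℕ} (hab : a ≤ b) (hb : b ≤ T.length) :
    (frag T a b).length = b - a := by
  simp [frag]; omega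

lemma frag_getElem? (T : List α) {a b t : ℕ} (ht : t < b - a) :
    (frag T a b)[t]? = T[a + t]? := by
  simp [frag, List.getElem?_take, ht, List.getElem?_drop]

lemma isPeriod_iff (T : List α) {a b p : ℕ} (hab : a ≤ b) (hb : b ≤ T.length) :
    IsPeriod (frag T a b) p ↔ 1 ≤ p ∧ p ≤ b - a ∧ TPer T a b p := by
  unfold IsPeriod TPer
  rw [frag_length T hab hb]
  constructor
  · rintro ⟨h1, h2, h3⟩
    refine ⟨h1, h2, fun x hx hxp => ?_⟩
    have := h3 (x - a) (by omega)
    rwa [frag_getElem? T (by omega), frag_getElem? T (by omega),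
      show a + (x - a) = x by omega, show a + (x - a + p) = x + p by omega] at this
  · rintro ⟨h1, h2, h3⟩
    refine ⟨h1, h2, fun i hi => ?_⟩
    rw [frag_getElem? T (by omega), frag_getElem? T (by omega)]
    have := h3 (a + i) (by omega) (by omega)
    rwa [show a + i + p = a + (i + p) by omega] at this

lemma isPeriod_self (T : List α) {a b : ℕ} (hab : a < b) (hb : b ≤ T.length) :
    IsPeriod (frag T a b) (b - a) := by
  rw [isPeriod_iff T hab.le hb]
  exact ⟨by omega, le_rfl, fun x hx hxp => absurd hxp (by omega)⟩

lemma per_isPeriod (T : List α) {a b : ℕ} (hab : a < b) (hb : b ≤ T.length) :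
    IsPeriod (frag T a b) (per (frag T a b)) := by
  have hne : {p | IsPeriod (frag T a b) p}.Nonempty := ⟨b - a, isPeriod_self T hab hb⟩
  exact Nat.sInf_mem hne

lemma per_le_of_isPeriod {S : List α} {p : ℕ} (h : IsPeriod S p) : per S ≤ p :=
  Nat.sInf_le h

lemma per_spec (T : List α) {a b : ℕ} (hab : a < b) (hb : b ≤ T.length) :
    1 ≤ per (frag T a b) ∧ per (frag T a b) ≤ b - a ∧ TPer T a b (per (frag T a b)) :=
  (isPeriod_iff T hab.le hb).1 (per_isPeriod T hab hb)

lemma per_le_of_TPer (T : List α) {a b p : ℕ} (hb : b ≤ T.length)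
    (h1 : 1 ≤ p) (h2 : p ≤ b - a) (h3 : TPer T a b p) : per (frag T a b) ≤ p :=
  per_le_of_isPeriod ((isPeriod_iff T (by omega) hb).2 ⟨h1, h2, h3⟩)

lemma TPer.mono {T : List α} {a b a' b' p : ℕ} (h : TPer T a b p)
    (ha : a ≤ a') (hb : b' ≤ b) : TPer T a' b' p :=
  fun x hx hxp => h x (by omega) (by omega)

lemma per_frag_mono (T : List α) {a b a' b' : ℕ} (ha : a ≤ a') (hb' : b' ≤ b)
    (hb : b ≤ T.length) (hab : a < b) (hle : per (frag T a b) ≤ b' - a') :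
    per (frag T a' b') ≤ per (frag T a b) := by
  obtain ⟨h1, h2, h3⟩ := per_spec T hab hb
  exact per_le_of_TPer T (by omega) h1 hle (h3.mono ha hb')

lemma tper_of_frag_eq (T : List α) {x y τ : ℕ} (hxy : x < y)
    (hy : y + τ ≤ T.length)
    (heq : frag T x (x + τ) = frag T y (y + τ)) :
    TPer T x (x + τ) (y - x) := by
  intro z hz hzp
  have := congrArg (fun l : List α => l[z - x]?) heq
  rw [frag_getElem? T (show z - x < x + τ - x by omega),
      frag_getElem? T (show z - x < y + τ - y by omega)] at this
  rwa [show x + (z - x) = z by omega, show y + (z - x) = z + (y - x) by omega] at this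

lemma frag_sub_eq (T : List α) {i j L d e : ℕ} (hi : i + L ≤ T.length) (hj : j + L ≤ T.length)
    (hde : d + e ≤ L) (heq : frag T i (i + L) = frag T j (j + L)) :
    frag T (i + d) (i + d + e) = frag T (j + d) (j + d + e) := by
  apply List.ext_getElem?
  intro t
  by_cases ht : t < e
  · rw [frag_getElem? T (by omega), frag_getElem? T (by omega)]
    have := congrArg (fun l : List α => l[d + t]?) heq
    rw [frag_getElem? T (by omega), frag_getElem? T (by omega)] at this
    rwa [show i + (d + t) = i + d + t by omega, show j + (d + t) = j + d + t by omega] at this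
  · have l1 : (frag T (i + d) (i + d + e)).length = e := by
      rw [frag_length T (by omega) (by omega)]; omega
    have l2 : (frag T (j + d) (j + d + e)).length = e := by
      rw [frag_length T (by omega) (by omega)]; omega
    rw [List.getElem?_eq_none (by rw [l1]; omega), List.getElem?_eq_none (by rw [l2]; omega)]

lemma comb (T : List α) {τ L a : ℕ} (hτ1 : 1 ≤ τ) (hτL : τ ≤ L) {b : ℕ} (hab : a ≤ b)
    (H : ∀ j, a ≤ j → j ≤ b → j + L ≤ T.length ∧ 3 * per (frag T j (j + L)) ≤ τ) :
    3 * per (frag T a (b + L)) ≤ τ := by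
  induction b, hab using Nat.le_induction with
  | base => exact (H a le_rfl le_rfl).2
  | succ b hab ih =>
    have ih' := ih (fun j hj hj' => H j hj (by omega))
    obtain ⟨hvb, -⟩ := H b (by omega) (by omega)
    obtain ⟨hv, hp'3⟩ := H (b + 1) (by omega) le_rfl
    obtain ⟨hp1, hp2, hpT⟩ := per_spec T (show b + 1 < b + 1 + L by omega) hv
    have hL1 : 3 ≤ τ := by omega
    obtain ⟨hr1, hr2, hrT⟩ := per_spec T (show a < b + L by omega) (by omega)
    set r := per (frag T a (b + L)) with hrdef
    set p' := per (frag T (b + 1) (b + 1 + L)) with hpdef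
    obtain ⟨d, hd⟩ : ∃ d, L = p' + r + 1 + d := ⟨L - (p' + r + 1), by omega⟩
    have key : TPer T a (b + 1 + L) r := by
      intro x hx hxr
      by_cases hx2 : x + r < b + L
      · exact hrT x hx hx2
      · have e3 : T[b+1+d]? = T[b+1+d+p']? := hpT (b+1+d) (by omega) (by omega)
        have e2 : T[b+1+d]? = T[b+1+d+r]? := hrT (b+1+d) (by omega) (by omega)
        have e1 : T[b+1+d+r]? = T[b+1+d+r+p']? := hpT (b+1+d+r) (by omega) (by omega)
        have hx' : x = b+1+d+p' := by omega
        have hgoal : x + r = b+1+d+r+p' := by omega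
        rw [hgoal, hx', ← e3, e2]
        exact e1
    have := per_le_of_TPer T (by omega) hr1 (by omega) key
    omega

lemma interval_lemma (T : List α) {τ q q' q'' : ℕ}
    (hq : q + τ ≤ T.length ∧ 3 * per (frag T q (q + τ)) ≤ τ)
    (hq' : q' + τ ≤ T.length ∧ 3 * per (frag T q' (q' + τ)) ≤ τ)
    (hle1 : q ≤ q'') (hle2 : q'' ≤ q') (hgap : 3 * (q' - q) ≤ τ) :
    q'' + τ ≤ T.length ∧ 3 * per (frag T q'' (q'' + τ)) ≤ τ := by
  obtain ⟨hqv, h1⟩ := hq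
  obtain ⟨hqv', h2⟩ := hq'
  refine ⟨by omega, ?_⟩
  rcases Nat.eq_zero_or_pos τ with hτ0 | hτ1
  · have : q'' = q' := by omega
    rw [this]; exact h2
  obtain ⟨hp11, hp12, hp1T⟩ := per_spec T (show q < q + τ by omega) hqv
  obtain ⟨hp21, hp22, hp2T⟩ := per_spec T (show q' < q' + τ by omega) hqv'
  set p1 := per (frag T q (q + τ)) with hp1d
  set p2 := per (frag T q' (q' + τ)) with hp2d
  have hτ3 : 3 ≤ τ := by omega
  have D : ∀ k x, q ≤ x → x < q' + p1 → q' - x ≤ k → T[x]? = T[x + p2]? := by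
    intro k
    induction k with
    | zero =>
      intro x hx hxlt hk
      exact hp2T x (by omega) (by omega)
    | succ k ih =>
      intro x hx hxlt hk
      by_cases hxq : q' ≤ x
      · exact hp2T x hxq (by omega)
      · have a1 : T[x]? = T[x + p1]? := hp1T x hx (by omega)
        have a2 : T[x + p2]? = T[x + p1 + p2]? := by
          have := hp1T (x + p2) (by omega) (by omega)
          rwa [show x + p2 + p1 = x + p1 + p2 by omega] at this
        have a3 : T[x + p1]? = T[x + p1 + p2]? := ih (x + p1) (by omega) (by omega) (by omega)
        rw [a1, a3, ← a2]
  have key : TPer T q'' (q'' + τ) p2 := by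
    intro x hx hxp
    by_cases hxq : q' ≤ x
    · exact hp2T x hxq (by omega)
    · exact D q' x (by omega) (by omega) (by omega)
  have := per_le_of_TPer T (by omega) hp21 (by omega) key
  omega

lemma exists_boundary {Q : ℕ → Prop} {a b : ℕ} (hab : a ≤ b) (ha : Q a) (hb : ¬ Q b) :
    ∃ j, a ≤ j ∧ j < b ∧ Q j ∧ ¬ Q (j + 1) := by
  classical
  have hex : ∃ k, ¬ Q (a + k) := ⟨b - a, by rwa [show a + (b - a) = b by omega]⟩
  set k := Nat.find hex with hkdef
  have hk : ¬ Q (a + k) := Nat.find_spec hex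
  have hk0 : k ≠ 0 := by
    intro h
    rw [h] at hk
    exact hk (by simpa using ha)
  have hkb : k ≤ b - a := Nat.find_le (by rwa [show a + (b - a) = b by omega])
  have hkm : Q (a + (k - 1)) := by
    by_contra hc
    exact Nat.find_min hex (show k - 1 < k by omega) hc
  have hne : a ≠ b := fun h => hb (h ▸ ha)
  refine ⟨a + (k - 1), by omega, by omega, hkm, ?_⟩
  rwa [show a + (k - 1) + 1 = a + k by omega]

lemma card_of_gaps3 {S : Finset ℕ} {lo hi τ : ℕ}
    (hmem : ∀ x ∈ S, lo ≤ x ∧ x ≤ hi)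
    (hgap : ∀ x ∈ S, ∀ y ∈ S, x < y → τ + 1 ≤ 3 * (y - x)) :
    S.card ≤ 3 * (hi - lo) / (τ + 1) + 1 := by
  classical
  have key : ∀ x ∈ S, ∀ y ∈ S, x < y → 3 * (x - lo) / (τ + 1) < 3 * (y - lo) / (τ + 1) := by
    intro x hx y hy h
    have h1 := hgap x hx y hy h
    have h2 := (hmem x hx).1
    have h3 : (3 * (x - lo) + (τ + 1)) / (τ + 1) ≤ 3 * (y - lo) / (τ + 1) :=
      Nat.div_le_div_right (by omega)
    rw [Nat.add_div_right _ (by omega)] at h3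
    omega
  have h := Finset.card_le_card_of_injOn (s := S) (t := Finset.range (3 * (hi - lo) / (τ + 1) + 1))
    (fun x => 3 * (x - lo) / (τ + 1)) ?_ ?_
  · simpa using h
  · intro x hx
    simp only [Finset.mem_coe, Finset.mem_range]
    have h1 := hmem x hx
    have h2 : 3 * (x - lo) / (τ + 1) ≤ 3 * (hi - lo) / (τ + 1) := Nat.div_le_div_right (by omega)
    omega
  · intro x hx y hy hxy
    simp only [Finset.mem_coe] at hx hy
    rcases lt_trichotomy x y with h | h | h
    · exact absurd hxy (Nat.ne_of_lt (key x hx y hy h))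
    · exact h
    · exact absurd hxy.symm (Nat.ne_of_lt (key y hy x hx h))


variable {α : Type*}

/-- Position `j` carries a highly periodic `τ`-fragment. -/
def Pp (T : List α) (τ j : ℕ) : Prop :=
  j + τ ≤ T.length ∧ 3 * per (frag T j (j + τ)) ≤ τ

def noP (T : List α) (τ s : ℕ) : Prop := ∀ j, s ≤ j → j ≤ s + τ → ¬ Pp T τ j

def minCond (T : List α) (τ : ℕ) (f : List α → ℕ) (s : ℕ) : Prop :=
  (∀ j, s ≤ j → j ≤ s + τ → f (frag T s (s + τ)) ≤ f (frag T j (j + τ))) ∨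
  (∀ j, s ≤ j → j ≤ s + τ → f (frag T (s + τ) (s + τ + τ)) ≤ f (frag T j (j + τ)))

def ruleB (T : List α) (τ s : ℕ) : Prop :=
  (Pp T τ s ∧ ¬ Pp T τ (s + 1)) ∨ (Pp T τ (s + τ - 1) ∧ ¬ Pp T τ (s + τ)) ∨
  (¬ Pp T τ s ∧ Pp T τ (s + 1)) ∨ (¬ Pp T τ (s + τ - 1) ∧ Pp T τ (s + τ))

def SyncPred (T : List α) (τ : ℕ) (f : List α → ℕ) (s : ℕ) : Prop :=
  (s + 2 * τ ≤ T.length ∧ τ < 3 * per (frag T s (s + 2 * τ))) ∧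
  ((noP T τ s ∧ minCond T τ f s) ∨ ruleB T τ s)

lemma ap_of_notPp_sub (T : List α) (τ : ℕ) (hτ : 1 ≤ τ) {s j : ℕ}
    (hs : s + 2 * τ ≤ T.length) (hj1 : s ≤ j)
    (hj2 : j + τ ≤ s + 2 * τ) (hnp : ¬ Pp T τ j) :
    s + 2 * τ ≤ T.length ∧ τ < 3 * per (frag T s (s + 2 * τ)) := by
  refine ⟨hs, ?_⟩
  by_contra hc
  push_neg at hc
  apply hnp
  refine ⟨by omega, ?_⟩
  have := per_frag_mono T (show s ≤ j from hj1) (show j + τ ≤ s + 2 * τ from hj2)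
    hs (show s < s + 2 * τ by omega) (by omega)
  omega

lemma syncPred_consistent (T : List α) (τ : ℕ) (f : List α → ℕ) (hτ : 1 ≤ τ) {i j : ℕ}
    (hi : i + 2 * τ ≤ T.length) (hj : j + 2 * τ ≤ T.length)
    (heq : frag T i (i + 2 * τ) = frag T j (j + 2 * τ))
    (h : SyncPred T τ f i) : SyncPred T τ f j := by
  have hw : ∀ d, d ≤ τ → frag T (i + d) (i + d + τ) = frag T (j + d) (j + d + τ) :=
    fun d hd => frag_sub_eq T hi hj (by omega) heq
  have hPp : ∀ d, d ≤ τ → (Pp T τ (i + d) ↔ Pp T τ (j + d)) := by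
    intro d hd
    unfold Pp
    rw [hw d hd]
    constructor <;> rintro ⟨-, h2⟩ <;> exact ⟨by omega, h2⟩
  obtain ⟨⟨-, hap⟩, hrule⟩ := h
  refine ⟨⟨hj, by rwa [← heq]⟩, ?_⟩
  rcases hrule with ⟨hn, hm⟩ | hb
  · left
    constructor
    · intro j' hj1 hj2
      have hd := hPp (j' - j) (by omega)
      rw [show j + (j' - j) = j' by omega] at hd
      rw [← hd]
      exact hn _ (by omega) (by omega)
    · have e0 : frag T i (i + τ) = frag T j (j + τ) := by
        have := hw 0 (by omega)
        simpa using this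
      have eτ : frag T (i + τ) (i + τ + τ) = frag T (j + τ) (j + τ + τ) := hw τ le_rfl
      rcases hm with hm | hm
      · left
        intro j' hj1 hj2
        have ed := hw (j' - j) (by omega)
        rw [show j + (j' - j) = j' by omega] at ed
        rw [← e0, ← ed]
        exact hm _ (by omega) (by omega)
      · right
        intro j' hj1 hj2
        have ed := hw (j' - j) (by omega)
        rw [show j + (j' - j) = j' by omega] at ed
        rw [← eτ, ← ed]
        exact hm _ (by omega) (by omega)
  · right
    have h0 : Pp T τ i ↔ Pp T τ j := by simpa using hPp 0 (by omega)
    have h1 : Pp T τ (i + 1) ↔ Pp T τ (j + 1) := hPp 1 (by omega)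
    have hτ1 : Pp T τ (i + τ - 1) ↔ Pp T τ (j + τ - 1) := by
      have := hPp (τ - 1) (by omega)
      rwa [show i + (τ - 1) = i + τ - 1 by omega, show j + (τ - 1) = j + τ - 1 by omega] at this
    have hττ : Pp T τ (i + τ) ↔ Pp T τ (j + τ) := hPp τ le_rfl
    rcases hb with ⟨p1, p2⟩ | ⟨p1, p2⟩ | ⟨p1, p2⟩ | ⟨p1, p2⟩
    · exact Or.inl ⟨h0.1 p1, fun hc => p2 (h1.2 hc)⟩
    · exact Or.inr (Or.inl ⟨hτ1.1 p1, fun hc => p2 (hττ.2 hc)⟩)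
    · exact Or.inr (Or.inr (Or.inl ⟨fun hc => p1 (h0.2 hc), h1.1 p2⟩))
    · exact Or.inr (Or.inr (Or.inr ⟨fun hc => p1 (hτ1.2 hc), hττ.1 p2⟩))

lemma density_empty (T : List α) (τ : ℕ) (hτ : 1 ≤ τ) (f : List α → ℕ) {i : ℕ}
    (h3 : i + 3 * τ ≤ T.length + 1)
    (hper : 3 * per (frag T i (i + 3 * τ - 1)) ≤ τ) {s : ℕ} (hs1 : i ≤ s) (hs2 : s < i + τ) :
    ¬ SyncPred T τ f s := by
  rintro ⟨⟨hv, hap⟩, -⟩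
  have hn : i + 3 * τ - 1 ≤ T.length := by omega
  have := per_frag_mono T (show i ≤ s from hs1) (show s + 2 * τ ≤ i + 3 * τ - 1 by omega)
    hn (show i < i + 3 * τ - 1 by omega) (by omega)
  omega

lemma density_nonempty (T : List α) (τ : ℕ) (hτ : 1 ≤ τ) (f : List α → ℕ) {i : ℕ}
    (h3 : i + 3 * τ ≤ T.length + 1)
    (hper : τ < 3 * per (frag T i (i + 3 * τ - 1))) :
    ∃ s, i ≤ s ∧ s < i + τ ∧ SyncPred T τ f s := by
  classical
  have hn : i + 3 * τ - 1 ≤ T.length := by omega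
  have step1 : ∃ s0, i ≤ s0 ∧ s0 ≤ i + τ - 1 ∧ τ < 3 * per (frag T s0 (s0 + 2 * τ)) := by
    by_contra hc
    push_neg at hc
    have hcomb := comb T hτ (show τ ≤ 2 * τ by omega) (show i ≤ i + τ - 1 by omega)
      (fun j hj1 hj2 => ⟨by omega, hc j hj1 hj2⟩)
    rw [show i + τ - 1 + 2 * τ = i + 3 * τ - 1 by omega] at hcomb
    omega
  obtain ⟨s0, hs01, hs02, hs0⟩ := step1
  have step2 : ∃ m, s0 ≤ m ∧ m ≤ s0 + τ ∧ ¬ Pp T τ m := by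
    by_contra hc
    push_neg at hc
    have hcomb := comb T hτ (le_refl τ) (show s0 ≤ s0 + τ by omega)
      (fun j h1 h2 => ⟨(hc j h1 h2).1, (hc j h1 h2).2⟩)
    rw [show s0 + τ + τ = s0 + 2 * τ by omega] at hcomb
    omega
  obtain ⟨m, hm1, hm2, hmP⟩ := step2
  by_cases hq : ∃ q, i ≤ q ∧ q ≤ i + 2 * τ - 1 ∧ Pp T τ q
  · -- case B: a periodic position exists in the window
    obtain ⟨q, hq1, hq2, hqP⟩ := hq
    rcases lt_trichotomy q m with hlt | heqq | hlt
    · obtain ⟨j, hj1, hj2, hjP, hjnP⟩ := exists_boundary (Q := Pp T τ) hlt.le hqP hmP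
      by_cases hjc : j ≤ i + τ - 1
      · refine ⟨j, by omega, by omega, ⟨?_, Or.inr (Or.inl ⟨hjP, hjnP⟩)⟩⟩
        exact ap_of_notPp_sub T τ hτ (by omega) (show j ≤ j + 1 by omega) (by omega) hjnP
      · have e1 : j + 1 - τ + τ - 1 = j := by omega
        have e2 : j + 1 - τ + τ = j + 1 := by omega
        refine ⟨j + 1 - τ, by omega, by omega,
          ⟨?_, Or.inr (Or.inr (Or.inl ⟨by rw [e1]; exact hjP, by rw [e2]; exact hjnP⟩))⟩⟩
        exact ap_of_notPp_sub T τ hτ (by omega) (by omega) (by omega) hjnP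
    · exact absurd hqP (by rw [heqq]; exact hmP)
    · obtain ⟨j, hj1, hj2, hjP, hjnP⟩ :=
        exists_boundary (Q := fun x => ¬ Pp T τ x) hlt.le hmP (not_not_intro hqP)
      have hjp1 : Pp T τ (j + 1) := not_not.mp hjnP
      by_cases hjc : i + τ ≤ j + 1
      · have e1 : j + 1 - τ + τ - 1 = j := by omega
        have e2 : j + 1 - τ + τ = j + 1 := by omega
        refine ⟨j + 1 - τ, by omega, by omega,
          ⟨?_, Or.inr (Or.inr (Or.inr (Or.inr ⟨by rw [e1]; exact hjP, by rw [e2]; exact hjp1⟩)))⟩⟩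
        exact ap_of_notPp_sub T τ hτ (by omega) (by omega) (by omega) hjP
      · refine ⟨j, by omega, by omega,
          ⟨?_, Or.inr (Or.inr (Or.inr (Or.inl ⟨hjP, hjp1⟩)))⟩⟩
        exact ap_of_notPp_sub T τ hτ (by omega) (le_refl j) (by omega) hjP
  · -- case A: no periodic position, use the minimizer
    push_neg at hq
    obtain ⟨M, hMmem, hMmin⟩ := Finset.exists_min_image (Finset.Icc i (i + 2 * τ - 1))
      (fun j => f (frag T j (j + τ))) ⟨i, by simp only [Finset.mem_Icc]; omega⟩
    simp only [Finset.mem_Icc] at hMmem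
    by_cases hM2 : M ≤ i + τ - 1
    · refine ⟨M, by omega, by omega, ⟨?_, Or.inl ⟨?_, Or.inl ?_⟩⟩⟩
      · exact ap_of_notPp_sub T τ hτ (by omega) (le_refl M) (by omega)
          (hq M (by omega) (by omega))
      · intro j' h1 h2
        exact hq j' (by omega) (by omega)
      · intro j' h1 h2
        exact hMmin j' (Finset.mem_Icc.mpr ⟨by omega, by omega⟩)
    · have hMτ : M - τ + τ = M := by omega
      refine ⟨M - τ, by omega, by omega, ⟨?_, Or.inl ⟨?_, Or.inr ?_⟩⟩⟩
      · exact ap_of_notPp_sub T τ hτ (by omega) (show M - τ ≤ M by omega) (by omega)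
          (hq M (by omega) (by omega))
      · intro j' h1 h2
        exact hq j' (by omega) (by omega)
      · intro j' h1 h2
        have := hMmin j' (Finset.mem_Icc.mpr ⟨by omega, by omega⟩)
        rw [hMτ]
        exact this

lemma interval_Pp (T : List α) {τ q q' q'' : ℕ} (hq : Pp T τ q) (hq' : Pp T τ q')
    (h1 : q ≤ q'') (h2 : q'' ≤ q') (hgap : 3 * (q' - q) ≤ τ) : Pp T τ q'' :=
  interval_lemma T hq hq' h1 h2 hgap

lemma exists_good_f [DecidableEq α] (T : List α) (τ : ℕ) (hτ : 1 ≤ τ) :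
    ∃ f : List α → ℕ, ∀ S : Finset ℕ,
      (∀ s ∈ S, (s + 2 * τ ≤ T.length ∧ noP T τ s) ∧ minCond T τ f s) →
      S.card * (τ + 1) ≤ 6 * (T.length + 1) := by
  classical
  set n := T.length with hn
  set F : Finset (List α) := ((Finset.range (n + 1)).filter
      (fun j => j + τ ≤ n ∧ τ < 3 * per (frag T j (j + τ)))).image
      (fun j => frag T j (j + τ)) with hF
  set ord : Equiv.Perm {x // x ∈ F} → List α → ℕ :=
    fun π y => if h : y ∈ F then (F.equivFin (π ⟨y, h⟩) : ℕ) else 0 with hord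
  have ord_inj : ∀ π : Equiv.Perm {x // x ∈ F}, ∀ y ∈ F, ∀ z ∈ F,
      ord π y = ord π z → y = z := by
    intro π y hy z hz h
    simp only [hord, dif_pos hy, dif_pos hz] at h
    have h1 := F.equivFin.injective (Fin.ext h)
    have h2 := π.injective h1
    exact congrArg Subtype.val h2
  -- per-candidate bound
  have main : ∀ s : ℕ, s + 2 * τ ≤ n → noP T τ s →
      (Finset.univ.filter (fun π : Equiv.Perm {x // x ∈ F} => minCond T τ (ord π) s)).card
        * (τ + 1) ≤ 6 * Fintype.card (Equiv.Perm {x // x ∈ F}) := by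
    intro s hsv hsnoP
    set Ds : Finset (List α) := (Finset.Icc s (s + τ)).image (fun j => frag T j (j + τ))
      with hDs
    have hDsF : ∀ y ∈ Ds, y ∈ F := by
      intro y hy
      simp only [hDs, Finset.mem_image, Finset.mem_Icc] at hy
      obtain ⟨j, ⟨hj1, hj2⟩, rfl⟩ := hy
      simp only [hF, Finset.mem_image, Finset.mem_filter, Finset.mem_range]
      refine ⟨j, ⟨by omega, by omega, ?_⟩, rfl⟩
      have hnp := hsnoP j hj1 hj2
      by_contra hc
      push_neg at hc
      exact hnp ⟨by omega, hc⟩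
    have hDs_card : τ + 1 ≤ 3 * Ds.card := by
      have hfib : ∀ b ∈ (Finset.Icc s (s + τ)).image (fun j => frag T j (j + τ)),
          ((Finset.Icc s (s + τ)).filter (fun a => frag T a (a + τ) = b)).card ≤ 3 := by
        intro b hb
        have hgap : ∀ x ∈ (Finset.Icc s (s + τ)).filter (fun a => frag T a (a + τ) = b),
            ∀ y ∈ (Finset.Icc s (s + τ)).filter (fun a => frag T a (a + τ) = b),
            x < y → τ + 1 ≤ 3 * (y - x) := by
          intro x hx y hy hxy
          simp only [Finset.mem_filter, Finset.mem_Icc] at hx hy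
          obtain ⟨⟨hx1, hx2⟩, hxb⟩ := hx
          obtain ⟨⟨hy1, hy2⟩, hyb⟩ := hy
          have heq : frag T x (x + τ) = frag T y (y + τ) := by rw [hxb, hyb]
          have htp := tper_of_frag_eq T hxy (by omega) heq
          have hple := per_le_of_TPer T (show x + τ ≤ T.length by omega)
            (by omega) (by omega) htp
          have hnp := hsnoP x hx1 hx2
          by_contra hc
          push_neg at hc
          exact hnp ⟨by omega, by omega⟩
        have := card_of_gaps3 (lo := s) (hi := s + τ)
          (fun x hx => by simp only [Finset.mem_filter, Finset.mem_Icc] at hx; omega) hgap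
        have h2 : 3 * (s + τ - s) / (τ + 1) < 3 :=
          Nat.div_lt_of_lt_mul (by omega)
        omega
      have := Finset.card_le_mul_card_image (f := fun j => frag T j (j + τ))
        (Finset.Icc s (s + τ)) 3 hfib
      rw [Nat.card_Icc] at this
      rw [show 3 * Ds.card = 3 * ((Finset.Icc s (s+τ)).image (fun j => frag T j (j + τ))).card
        from rfl]
      omega
    -- the events
    set E : List α → Finset (Equiv.Perm {x // x ∈ F}) := fun x =>
      Finset.univ.filter (fun π => ∀ y ∈ Ds, ord π x ≤ ord π y) with hE
    have hdisj : ∀ x ∈ Ds, ∀ y ∈ Ds, x ≠ y → Disjoint (E x) (E y) := by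
      intro x hx y hy hxy
      rw [Finset.disjoint_left]
      intro π hπx hπy
      simp only [hE, Finset.mem_filter, Finset.mem_univ, true_and] at hπx hπy
      exact hxy (ord_inj π x (hDsF x hx) y (hDsF y hy)
        (le_antisymm (hπx y hy) (hπy x hx)))
    have hcardeq : ∀ x ∈ Ds, ∀ y ∈ Ds, (E x).card = (E y).card := by
      intro x hx y hy
      have hxF := hDsF x hx
      have hyF := hDsF y hy
      set x' : {z // z ∈ F} := ⟨x, hxF⟩ with hx'
      set y' : {z // z ∈ F} := ⟨y, hyF⟩ with hy'
      have swapval : ∀ w (hwF : w ∈ F), (((Equiv.swap x' y') ⟨w, hwF⟩ : {z // z ∈ F}) : List α)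
          = if w = x then y else if w = y then x else w := by
        intro w hwF
        rcases eq_or_ne w x with rfl | h1
        · have hww : (⟨w, hwF⟩ : {z // z ∈ F}) = x' := Subtype.ext rfl
          rw [hww, Equiv.swap_apply_left, if_pos rfl]
        rcases eq_or_ne w y with rfl | h2
        · have hww : (⟨w, hwF⟩ : {z // z ∈ F}) = y' := Subtype.ext rfl
          rw [hww, Equiv.swap_apply_right, if_neg h1, if_pos rfl]
        · rw [Equiv.swap_apply_of_ne_of_ne (fun h => h1 (by simpa using congrArg Subtype.val h))
            (fun h => h2 (by simpa using congrArg Subtype.val h)), if_neg h1, if_neg h2]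
      have oc : ∀ π : Equiv.Perm {z // z ∈ F}, ∀ w (hwF : w ∈ F),
          ord (π * Equiv.swap x' y') w
            = ord π (if w = x then y else if w = y then x else w) := by
        intro π w hwF
        have hsw : (((Equiv.swap x' y') ⟨w, hwF⟩ : {z // z ∈ F}) : List α) ∈ F :=
          ((Equiv.swap x' y') ⟨w, hwF⟩).2
        have : ord π (((Equiv.swap x' y') ⟨w, hwF⟩ : {z // z ∈ F}) : List α)
            = (F.equivFin (π ((Equiv.swap x' y') ⟨w, hwF⟩)) : ℕ) := by
          simp only [hord, dif_pos hsw, Subtype.coe_eta]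
        rw [← swapval w hwF, this]
        simp only [hord, dif_pos hwF, Equiv.Perm.mul_apply]
      have hDsmem : ∀ w ∈ Ds, (if w = x then y else if w = y then x else w) ∈ Ds := by
        intro w hw
        split_ifs with h1 h2
        · exact hy
        · exact hx
        · exact hw
      have step : ∀ (u v : List α), u ∈ Ds → v ∈ Ds →
          (if v = x then y else if v = y then x else v) = u →
          ∀ π ∈ E u, π * Equiv.swap x' y' ∈ E v := by
        intro u v hu hv hvu π hπ
        simp only [hE, Finset.mem_filter, Finset.mem_univ, true_and] at hπ ⊢
        intro w hw
        rw [oc π v (hDsF v hv), oc π w (hDsF w hw), hvu]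
        exact hπ _ (hDsmem w hw)
      apply Finset.card_bij' (fun π _ => π * Equiv.swap x' y') (fun π _ => π * Equiv.swap x' y')
      · intro π hπ
        refine step x y hx hy ?_ π hπ
        rcases eq_or_ne y x with h | h
        · rw [if_pos h]; exact h
        · rw [if_neg h, if_pos rfl]
      · intro π hπ
        refine step y x hy hx ?_ π hπ
        rw [if_pos rfl]
      · intro π hπ
        rw [mul_assoc, Equiv.swap_mul_self, mul_one]
      · intro π hπ
        rw [mul_assoc, Equiv.swap_mul_self, mul_one]
    have hsum : ∀ x ∈ Ds, (E x).card * Ds.card ≤ Fintype.card (Equiv.Perm {z // z ∈ F}) := by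
      intro x hx
      have h1 : ∑ y ∈ Ds, (E y).card = (E x).card * Ds.card := by
        rw [Finset.sum_congr rfl (fun y hy => hcardeq y hy x hx), Finset.sum_const, smul_eq_mul,
          mul_comm]
      rw [← h1, ← Finset.card_biUnion hdisj]
      exact Finset.card_le_univ _
    have hx0 : frag T s (s + τ) ∈ Ds := by
      simp only [hDs, Finset.mem_image, Finset.mem_Icc]
      exact ⟨s, ⟨le_rfl, by omega⟩, rfl⟩
    have hx1 : frag T (s + τ) (s + τ + τ) ∈ Ds := by
      simp only [hDs, Finset.mem_image, Finset.mem_Icc]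
      exact ⟨s + τ, ⟨by omega, le_rfl⟩, rfl⟩
    have hsub : Finset.univ.filter (fun π : Equiv.Perm {x // x ∈ F} => minCond T τ (ord π) s)
        ⊆ E (frag T s (s + τ)) ∪ E (frag T (s + τ) (s + τ + τ)) := by
      intro π hπ
      simp only [Finset.mem_filter, Finset.mem_univ, true_and] at hπ
      rcases hπ with h | h
      · apply Finset.mem_union_left
        simp only [hE, Finset.mem_filter, Finset.mem_univ, true_and]
        intro y hy
        simp only [hDs, Finset.mem_image, Finset.mem_Icc] at hy
        obtain ⟨j, ⟨h1, h2⟩, rfl⟩ := hy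
        exact h j h1 h2
      · apply Finset.mem_union_right
        simp only [hE, Finset.mem_filter, Finset.mem_univ, true_and]
        intro y hy
        simp only [hDs, Finset.mem_image, Finset.mem_Icc] at hy
        obtain ⟨j, ⟨h1, h2⟩, rfl⟩ := hy
        exact h j h1 h2
    have hc1 : (Finset.univ.filter
        (fun π : Equiv.Perm {x // x ∈ F} => minCond T τ (ord π) s)).card
        ≤ (E (frag T s (s + τ))).card + (E (frag T (s + τ) (s + τ + τ))).card :=
      le_trans (Finset.card_le_card hsub) (Finset.card_union_le _ _)
    have h2a := hsum _ hx0
    have h2b := hsum _ hx1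
    calc (Finset.univ.filter
        (fun π : Equiv.Perm {x // x ∈ F} => minCond T τ (ord π) s)).card * (τ + 1)
        ≤ ((E (frag T s (s + τ))).card + (E (frag T (s + τ) (s + τ + τ))).card)
          * (3 * Ds.card) := Nat.mul_le_mul hc1 hDs_card
      _ = 3 * ((E (frag T s (s + τ))).card * Ds.card
          + (E (frag T (s + τ) (s + τ + τ))).card * Ds.card) := by ring
      _ ≤ 3 * (Fintype.card (Equiv.Perm {x // x ∈ F})
          + Fintype.card (Equiv.Perm {x // x ∈ F})) := by
          apply Nat.mul_le_mul_left
          omega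
      _ = 6 * Fintype.card (Equiv.Perm {x // x ∈ F}) := by ring
  -- averaging
  set cond : ℕ → Equiv.Perm {x // x ∈ F} → Prop :=
    fun s π => (s + 2 * τ ≤ n ∧ noP T τ s) ∧ minCond T τ (ord π) s with hcond
  have per_s : ∀ s : ℕ, (Finset.univ.filter (fun π => cond s π)).card * (τ + 1)
      ≤ 6 * Fintype.card (Equiv.Perm {x // x ∈ F}) := by
    intro s
    by_cases hs : s + 2 * τ ≤ n ∧ noP T τ s
    · refine le_trans (Nat.mul_le_mul_right _ (Finset.card_le_card ?_)) (main s hs.1 hs.2)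
      intro π hπ
      simp only [hcond, Finset.mem_filter, Finset.mem_univ, true_and] at hπ ⊢
      exact hπ.2
    · have : Finset.univ.filter (fun π : Equiv.Perm {x // x ∈ F} => cond s π) = ∅ := by
        apply Finset.filter_eq_empty_iff.mpr
        intro π hπ
        simp only [hcond]
        exact fun hc => hs hc.1
      rw [this]
      simp
  have hswap : (∑ π : Equiv.Perm {x // x ∈ F},
      ((Finset.range (n + 1)).filter (fun s => cond s π)).card) * (τ + 1)
      ≤ Fintype.card (Equiv.Perm {x // x ∈ F}) * (6 * (n + 1)) := by
    have e1 : ∀ π : Equiv.Perm {x // x ∈ F},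
        ((Finset.range (n + 1)).filter (fun s => cond s π)).card
        = ∑ s ∈ Finset.range (n + 1), if cond s π then 1 else 0 :=
      fun π => Finset.card_filter _ _
    have e2 : ∀ s ∈ Finset.range (n + 1),
        (∑ π : Equiv.Perm {x // x ∈ F}, if cond s π then 1 else 0)
        = (Finset.univ.filter (fun π => cond s π)).card :=
      fun s _ => (Finset.card_filter _ _).symm
    calc (∑ π : Equiv.Perm {x // x ∈ F},
        ((Finset.range (n + 1)).filter (fun s => cond s π)).card) * (τ + 1)
        = (∑ s ∈ Finset.range (n + 1),
            (Finset.univ.filter (fun π => cond s π)).card) * (τ + 1) := by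
          rw [Finset.sum_congr rfl (fun π _ => e1 π), Finset.sum_comm,
            Finset.sum_congr rfl e2]
      _ = ∑ s ∈ Finset.range (n + 1),
            (Finset.univ.filter (fun π => cond s π)).card * (τ + 1) := by
          rw [Finset.sum_mul]
      _ ≤ ∑ s ∈ Finset.range (n + 1), 6 * Fintype.card (Equiv.Perm {x // x ∈ F}) :=
          Finset.sum_le_sum (fun s _ => per_s s)
      _ = (n + 1) * (6 * Fintype.card (Equiv.Perm {x // x ∈ F})) := by
          rw [Finset.sum_const, Finset.card_range, smul_eq_mul]
      _ = Fintype.card (Equiv.Perm {x // x ∈ F}) * (6 * (n + 1)) := by ring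
  have hpig : ∃ π : Equiv.Perm {x // x ∈ F},
      ((Finset.range (n + 1)).filter (fun s => cond s π)).card * (τ + 1) ≤ 6 * (n + 1) := by
    have hne : (Finset.univ : Finset (Equiv.Perm {x // x ∈ F})).Nonempty :=
      ⟨1, Finset.mem_univ 1⟩
    have hsum2 : ∑ π : Equiv.Perm {x // x ∈ F},
        ((Finset.range (n + 1)).filter (fun s => cond s π)).card * (τ + 1)
        ≤ ∑ _π : Equiv.Perm {x // x ∈ F}, 6 * (n + 1) := by
      rw [← Finset.sum_mul, Finset.sum_const, Finset.card_univ, smul_eq_mul]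
      exact hswap
    obtain ⟨π, -, hπ⟩ := Finset.exists_le_of_sum_le hne hsum2
    exact ⟨π, hπ⟩
  obtain ⟨π, hπ⟩ := hpig
  refine ⟨ord π, fun S hS => ?_⟩
  have hsubS : S ⊆ (Finset.range (n + 1)).filter (fun s => cond s π) := by
    intro s hs
    obtain ⟨⟨h1, h2⟩, h3⟩ := hS s hs
    simp only [Finset.mem_filter, Finset.mem_range, hcond]
    exact ⟨by omega, ⟨h1, h2⟩, h3⟩
  exact le_trans (Nat.mul_le_mul_right _ (Finset.card_le_card hsubS)) hπ

theorem statement0' (σ n τ : ℕ) (T : List (Fin σ)) (hT : T.length = n)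
    (hτ1 : 1 ≤ τ) (hτ2 : 2 * τ ≤ n) :
    ∃ Sync : Finset ℕ,
      (∀ i ∈ (↑Sync : Set ℕ), i + 2 * τ ≤ T.length) ∧
      (∀ i j : ℕ, i + 2 * τ ≤ T.length → j + 2 * τ ≤ T.length → i ∈ (↑Sync : Set ℕ) →
        frag T i (i + 2 * τ) = frag T j (j + 2 * τ) → j ∈ (↑Sync : Set ℕ)) ∧
      (∀ i : ℕ, i + 3 * τ ≤ T.length + 1 →
        (Set.Ico i (i + τ) ∩ (↑Sync : Set ℕ) = ∅ ↔
          3 * per (frag T i (i + 3 * τ - 1)) ≤ τ)) ∧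
      τ * Sync.card < 70 * n ∧
      ∀ i ∈ Sync, τ < 3 * per (frag T i (i + 2 * τ)) := by
  classical
  subst hT
  obtain ⟨f, hf⟩ := exists_good_f T τ hτ1
  set n := T.length with hn
  set Sync : Finset ℕ := (Finset.range (n + 1)).filter (fun s => SyncPred T τ f s) with hSync
  have hmem : ∀ s, s ∈ Sync ↔ SyncPred T τ f s := by
    intro s
    simp only [hSync, Finset.mem_filter, Finset.mem_range]
    constructor
    · rintro ⟨-, h⟩; exact h
    · intro h
      refine ⟨?_, h⟩
      have := h.1.1
      omega
  refine ⟨Sync, ?_, ?_, ?_, ?_, ?_⟩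
  · intro s hs
    rw [Finset.mem_coe, hmem] at hs
    exact hs.1.1
  · intro i j hi hj hiS heq
    rw [Finset.mem_coe, hmem] at hiS ⊢
    exact syncPred_consistent T τ f hτ1 hi hj heq hiS
  · intro i h3
    constructor
    · intro hemp
      by_contra hc
      push_neg at hc
      obtain ⟨s, hs1, hs2, hsP⟩ := density_nonempty T τ hτ1 f h3 hc
      have hscontra : s ∈ Set.Ico i (i + τ) ∩ (↑Sync : Set ℕ) :=
        ⟨⟨hs1, hs2⟩, by rw [Finset.mem_coe, hmem]; exact hsP⟩
      rw [hemp] at hscontra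
      exact hscontra
    · intro hper
      rw [Set.eq_empty_iff_forall_notMem]
      rintro s ⟨⟨h1, h2⟩, hsS⟩
      rw [Finset.mem_coe, hmem] at hsS
      exact density_empty T τ hτ1 f h3 hper h1 h2 hsS
  · -- counting
    set SA : Finset ℕ := Sync.filter (fun s => noP T τ s ∧ minCond T τ f s) with hSA
    set SB1 : Finset ℕ := Sync.filter (fun s => Pp T τ s ∧ ¬ Pp T τ (s + 1)) with hSB1
    set SB2 : Finset ℕ := Sync.filter (fun s => Pp T τ (s + τ - 1) ∧ ¬ Pp T τ (s + τ)) with hSB2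
    set SB3 : Finset ℕ := Sync.filter (fun s => ¬ Pp T τ s ∧ Pp T τ (s + 1)) with hSB3
    set SB4 : Finset ℕ := Sync.filter (fun s => ¬ Pp T τ (s + τ - 1) ∧ Pp T τ (s + τ)) with hSB4
    have hsub : Sync ⊆ SA ∪ (SB1 ∪ (SB2 ∪ (SB3 ∪ SB4))) := by
      intro s hs
      have hs' := (hmem s).1 hs
      rcases hs'.2 with ⟨h1, h2⟩ | (h | h | h | h)
      · exact Finset.mem_union_left _ (Finset.mem_filter.mpr ⟨hs, h1, h2⟩)
      · exact Finset.mem_union_right _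
          (Finset.mem_union_left _ (Finset.mem_filter.mpr ⟨hs, h⟩))
      · exact Finset.mem_union_right _ (Finset.mem_union_right _
          (Finset.mem_union_left _ (Finset.mem_filter.mpr ⟨hs, h⟩)))
      · exact Finset.mem_union_right _ (Finset.mem_union_right _ (Finset.mem_union_right _
          (Finset.mem_union_left _ (Finset.mem_filter.mpr ⟨hs, h⟩))))
      · exact Finset.mem_union_right _ (Finset.mem_union_right _ (Finset.mem_union_right _
          (Finset.mem_union_right _ (Finset.mem_filter.mpr ⟨hs, h⟩))))
    have hAcard : SA.card * (τ + 1) ≤ 6 * (n + 1) := by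
      apply hf
      intro s hs
      rw [hSA, Finset.mem_filter] at hs
      obtain ⟨hsS, h1, h2⟩ := hs
      exact ⟨⟨((hmem s).1 hsS).1.1, h1⟩, h2⟩
    have hBmem : ∀ s ∈ Sync, s ≤ n := by
      intro s hs
      have := ((hmem s).1 hs).1.1
      omega
    have hB1 : SB1.card ≤ 3 * n / (τ + 1) + 1 := by
      have h := card_of_gaps3 (S := SB1) (lo := 0) (hi := n) (τ := τ) ?_ ?_
      · simpa using h
      · intro x hx
        exact ⟨Nat.zero_le x, hBmem x (Finset.mem_filter.mp hx).1⟩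
      · intro x hx y hy hxy
        rw [hSB1, Finset.mem_filter] at hx hy
        by_contra hc
        push_neg at hc
        exact hx.2.2 (interval_Pp T hx.2.1 hy.2.1 (by omega) (by omega) (by omega))
    have hB2 : SB2.card ≤ 3 * n / (τ + 1) + 1 := by
      have h := card_of_gaps3 (S := SB2) (lo := 0) (hi := n) (τ := τ) ?_ ?_
      · simpa using h
      · intro x hx
        exact ⟨Nat.zero_le x, hBmem x (Finset.mem_filter.mp hx).1⟩
      · intro x hx y hy hxy
        rw [hSB2, Finset.mem_filter] at hx hy
        by_contra hc
        push_neg at hc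
        exact hx.2.2 (interval_Pp T hx.2.1 hy.2.1 (by omega) (by omega) (by omega))
    have hB3 : SB3.card ≤ 3 * n / (τ + 1) + 1 := by
      have h := card_of_gaps3 (S := SB3) (lo := 0) (hi := n) (τ := τ) ?_ ?_
      · simpa using h
      · intro x hx
        exact ⟨Nat.zero_le x, hBmem x (Finset.mem_filter.mp hx).1⟩
      · intro x hx y hy hxy
        rw [hSB3, Finset.mem_filter] at hx hy
        by_contra hc
        push_neg at hc
        exact hy.2.1 (interval_Pp T hx.2.2 hy.2.2 (by omega) (by omega) (by omega))
    have hB4 : SB4.card ≤ 3 * n / (τ + 1) + 1 := by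
      have h := card_of_gaps3 (S := SB4) (lo := 0) (hi := n) (τ := τ) ?_ ?_
      · simpa using h
      · intro x hx
        exact ⟨Nat.zero_le x, hBmem x (Finset.mem_filter.mp hx).1⟩
      · intro x hx y hy hxy
        rw [hSB4, Finset.mem_filter] at hx hy
        by_contra hc
        push_neg at hc
        exact hy.2.1 (interval_Pp T hx.2.2 hy.2.2 (by omega) (by omega) (by omega))
    have hcard : Sync.card ≤ SA.card + (SB1.card + (SB2.card + (SB3.card + SB4.card))) :=
      le_trans (Finset.card_le_card hsub)
        (le_trans (Finset.card_union_le _ _)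
          (Nat.add_le_add_left (le_trans (Finset.card_union_le _ _)
            (Nat.add_le_add_left (le_trans (Finset.card_union_le _ _)
              (Nat.add_le_add_left (Finset.card_union_le _ _) _)) _)) _))
    have hdiv : 3 * n / (τ + 1) * (τ + 1) ≤ 3 * n := Nat.div_mul_le_self _ _
    have hτA : τ * SA.card ≤ 6 * (n + 1) := by
      calc τ * SA.card ≤ SA.card * (τ + 1) := by
            rw [mul_comm]; exact Nat.mul_le_mul_left _ (by omega)
        _ ≤ 6 * (n + 1) := hAcard
    have hτB : ∀ c : ℕ, c ≤ 3 * n / (τ + 1) + 1 → τ * c ≤ 3 * n + τ := by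
      intro c hc
      calc τ * c ≤ τ * (3 * n / (τ + 1) + 1) := Nat.mul_le_mul_left _ hc
        _ = τ * (3 * n / (τ + 1)) + τ := by ring
        _ ≤ 3 * n + τ := by
            have h1 : τ * (3 * n / (τ + 1)) ≤ 3 * n / (τ + 1) * (τ + 1) := by
              rw [mul_comm]; exact Nat.mul_le_mul_left _ (by omega)
            omega
    have hτS : τ * Sync.card
        ≤ τ * SA.card + (τ * SB1.card + (τ * SB2.card + (τ * SB3.card + τ * SB4.card))) := by
      calc τ * Sync.card
          ≤ τ * (SA.card + (SB1.card + (SB2.card + (SB3.card + SB4.card)))) :=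
            Nat.mul_le_mul_left _ hcard
        _ = _ := by ring
    have b1 := hτB _ hB1
    have b2 := hτB _ hB2
    have b3 := hτB _ hB3
    have b4 := hτB _ hB4
    have n2 : 2 ≤ n := by omega
    linarith [hτS, hτA, b1, b2, b3, b4]
  · intro i hiS
    rw [hmem] at hiS
    exact hiS.1.2

/-- For every string `T ∈ [0..σ)^n` and every `τ ∈ [1..⌊n/2⌋]` there exists a
`τ`-synchronizing set `Sync` of `T` with `|Sync| < 70n/τ` such that `per(T[i..i+2τ)) > τ/3`
holds for every `i ∈ Sync`. -/
theorem statement0 (σ n τ : ℕ) (T : List (Fin σ)) (hT : T.length = n)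
    (hτ1 : 1 ≤ τ) (hτ2 : 2 * τ ≤ n) :
    ∃ Sync : Finset ℕ,
      IsSyncSet T τ (↑Sync : Set ℕ) ∧
      τ * Sync.card < 70 * n ∧
      ∀ i ∈ Sync, τ < 3 * per (frag T i (i + 2 * τ)) := by
  obtain ⟨Sync, h1, h2, h3, h4, h5⟩ := statement0' σ n τ T hT hτ1 hτ2
  exact ⟨Sync, ⟨h1, h2, h3⟩, h4, h5⟩

end SyncFormal
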